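/- (Converse of the distributed task-encoding theorem, general sources.) Fix ρ > 0 and set ρ̃ = 1/(1+ρ). For each n, let P_{X^n Y^n} be a joint PMF on X^n × Y^n (where X and Y are finite sets), with marginals P_{X^n} and P_{Y^n}. Let R_X, R_Y ≥ 0, and suppose there exists a sequence of pairs of functions f_n : X^n → {1,…,⌊2^{n·R_X}⌋}, g_n : Y^n → {1,…,⌊2^{n·R_Y}⌋} such that E[L(X^n,Y^n)^ρ] → 1 as n → ∞, where L(x^n,y^n) = |{(x',y') ∈ X^n × Y^n : f_n(x') = f_n(x^n) ∧ g_n(y') = g_n(y^n)}|. Then R_X ≥ limsup_{n→∞} H_{ρ̃}(P_{X^n})/n, R_Y ≥ limsup_{n→∞} H_{ρ̃}(P_{Y^n})/n, and R_X + R_Y ≥ limsup_{n→∞} [H_{ρ̃}(P_{X^n Y^n}) + K_{ρ̃}(X^n;Y^n)]/n. -/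

import Mathlib

open Filter

/-- `P` is a probability mass function on the finite type `X`. -/
def IsPMF {X : Type*} [Fintype X] (P : X → ℝ) : Prop :=
  (∀ x, 0 ≤ P x) ∧ ∑ x, P x = 1

/-- Rényi entropy of order `α` (base-2 logarithm). -/
noncomputable def renyiEntropy {X : Type*} [Fintype X] (α : ℝ) (P : X → ℝ) : ℝ :=
  (1 - α)⁻¹ * Real.logb 2 (∑ x, P x ^ α)

/-- Relative `α`-entropy `Δ_α(P‖Q)` (base-2 logarithm). -/
noncomputable def relAlphaEntropy {X : Type*} [Fintype X] (α : ℝ) (P Q : X → ℝ) : ℝ :=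
  (α / (1 - α)) * Real.logb 2 (∑ x, P x * Q x ^ (α - 1))
    + Real.logb 2 (∑ x, Q x ^ α)
    - (1 - α)⁻¹ * Real.logb 2 (∑ x, P x ^ α)

/-- The dependence measure `K_α(X;Y)`: the minimum of `Δ_α(P_{XY}‖Q_X Q_Y)` over all PMFs
`Q_X` and `Q_Y`.  (Restricting to everywhere-positive `Q_X`, `Q_Y` gives the same value,
since by the convention `p/0 = ∞` any `Q` vanishing on the support of `P` yields an
infinite relative entropy, and `Δ_α` is continuous in positive `Q`.) -/
noncomputable def Kdep {X Y : Type*} [Fintype X] [Fintype Y] (α : ℝ) (P : X × Y → ℝ) : ℝ :=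
  sInf {r : ℝ | ∃ QX : X → ℝ, ∃ QY : Y → ℝ, IsPMF QX ∧ IsPMF QY ∧
    (∀ x, 0 < QX x) ∧ (∀ y, 0 < QY y) ∧
    r = relAlphaEntropy α P (fun p => QX p.1 * QY p.2)}

/-- The joint list size of `(xs,ys)` under the encoders `f` and `g`. -/
noncomputable def jointListSize {X Y : Type*} [Fintype X] [Fintype Y] {MX MY : ℕ}
    (f : X → Fin MX) (g : Y → Fin MY) (x : X) (y : Y) : ℕ :=
  (Finset.univ.filter (fun p : X × Y => f p.1 = f x ∧ g p.2 = g y)).card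


lemma aux_nonempty {Z : Type*} [Fintype Z] {P : Z → ℝ} (h : ∑ z, P z = 1) : Nonempty Z := by
  by_contra hne
  rw [not_nonempty_iff] at hne
  rw [Finset.univ_eq_empty, Finset.sum_empty] at h
  norm_num at h

lemma aux_exists_pos {Z : Type*} [Fintype Z] {P : Z → ℝ} (h0 : ∀ z, 0 ≤ P z)
    (h : ∑ z, P z = 1) : ∃ z, 0 < P z := by
  by_contra hne
  push_neg at hne
  have : ∑ z, P z = 0 := Finset.sum_eq_zero fun z _ => le_antisymm (hne z) (h0 z)
  rw [this] at h; norm_num at h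

lemma one_le_rpow_aux {x z : ℝ} (hx : 1 ≤ x) (hz : 0 ≤ z) : 1 ≤ x ^ z :=
  Real.one_le_rpow hx hz

lemma holder_core {Z : Type*} [Fintype Z] {α : ℝ} (hα0 : 0 < α) (hα1 : α < 1)
    (P Q : Z → ℝ) (hP0 : ∀ z, 0 ≤ P z) (hPs : ∑ z, P z = 1) (hQ : ∀ z, 0 < Q z) :
    Real.logb 2 (∑ z, P z ^ α) ≤
      α * Real.logb 2 (∑ z, P z * Q z ^ (α - 1)) + (1 - α) * Real.logb 2 (∑ z, Q z ^ α) := by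
  haveI : Nonempty Z := aux_nonempty hPs
  obtain ⟨z₀, hz₀⟩ := aux_exists_pos hP0 hPs
  have h1α : 0 < 1 - α := by linarith
  have hApos : 0 < ∑ z, P z * Q z ^ (α - 1) :=
    Finset.sum_pos' (fun z _ => mul_nonneg (hP0 z) (Real.rpow_nonneg (hQ z).le _))
      ⟨z₀, Finset.mem_univ _, mul_pos hz₀ (Real.rpow_pos_of_pos (hQ z₀) _)⟩
  have hBpos : 0 < ∑ z, Q z ^ α :=
    Finset.sum_pos (fun z _ => Real.rpow_pos_of_pos (hQ z) _) Finset.univ_nonempty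
  have hSpos : 0 < ∑ z, P z ^ α :=
    Finset.sum_pos' (fun z _ => Real.rpow_nonneg (hP0 z) _)
      ⟨z₀, Finset.mem_univ _, Real.rpow_pos_of_pos hz₀ _⟩
  have hconj : Real.HolderConjugate (1 / α) (1 / (1 - α)) := by
    rw [Real.holderConjugate_iff]; constructor
    · rw [lt_div_iff₀ hα0]; linarith
    · rw [one_div, one_div, inv_inv, inv_inv]; ring
  have hold := Real.inner_le_Lp_mul_Lq_of_nonneg (s := (Finset.univ : Finset Z)) hconj
    (f := fun z => (P z * Q z ^ (α - 1)) ^ α) (g := fun z => (Q z ^ α) ^ (1 - α))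
    (fun z _ => Real.rpow_nonneg (mul_nonneg (hP0 z) (Real.rpow_nonneg (hQ z).le _)) _)
    (fun z _ => Real.rpow_nonneg (Real.rpow_nonneg (hQ z).le _) _)
  have e1 : ∀ z : Z, (P z * Q z ^ (α - 1)) ^ α * (Q z ^ α) ^ (1 - α) = P z ^ α := by
    intro z
    rw [Real.mul_rpow (hP0 z) (Real.rpow_nonneg (hQ z).le _), mul_assoc,
      ← Real.rpow_mul (hQ z).le, ← Real.rpow_mul (hQ z).le, ← Real.rpow_add (hQ z),
      show (α - 1) * α + α * (1 - α) = 0 by ring, Real.rpow_zero, mul_one]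
  have e2 : ∀ z : Z, ((P z * Q z ^ (α - 1)) ^ α) ^ (1 / α) = P z * Q z ^ (α - 1) := by
    intro z
    rw [← Real.rpow_mul (mul_nonneg (hP0 z) (Real.rpow_nonneg (hQ z).le _)),
      mul_one_div_cancel hα0.ne', Real.rpow_one]
  have e3 : ∀ z : Z, ((Q z ^ α) ^ (1 - α)) ^ (1 / (1 - α)) = Q z ^ α := by
    intro z
    rw [← Real.rpow_mul (Real.rpow_nonneg (hQ z).le _),
      mul_one_div_cancel h1α.ne', Real.rpow_one]
  simp only [e1, e2, e3, one_div_one_div] at hold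
  calc Real.logb 2 (∑ z, P z ^ α)
      ≤ Real.logb 2 ((∑ z, P z * Q z ^ (α - 1)) ^ α * (∑ z, Q z ^ α) ^ (1 - α)) :=
        Real.logb_le_logb_of_le one_lt_two hSpos hold
    _ = α * Real.logb 2 (∑ z, P z * Q z ^ (α - 1)) + (1 - α) * Real.logb 2 (∑ z, Q z ^ α) := by
        rw [Real.logb_mul (Real.rpow_pos_of_pos hApos _).ne' (Real.rpow_pos_of_pos hBpos _).ne',
          Real.logb_rpow_eq_mul_logb_of_pos hApos, Real.logb_rpow_eq_mul_logb_of_pos hBpos]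

lemma relAlpha_nonneg {Z : Type*} [Fintype Z] {α : ℝ} (hα0 : 0 < α) (hα1 : α < 1)
    (P Q : Z → ℝ) (hP0 : ∀ z, 0 ≤ P z) (hPs : ∑ z, P z = 1) (hQ : ∀ z, 0 < Q z) :
    0 ≤ relAlphaEntropy α P Q := by
  have h := holder_core hα0 hα1 P Q hP0 hPs hQ
  have h1α : 0 < 1 - α := by linarith
  unfold relAlphaEntropy
  set LA := Real.logb 2 (∑ z, P z * Q z ^ (α - 1))
  set LB := Real.logb 2 (∑ z, Q z ^ α)
  set LS := Real.logb 2 (∑ z, P z ^ α)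
  have e : α / (1 - α) * LA + LB - (1 - α)⁻¹ * LS
      = (1 - α)⁻¹ * ((α * LA + (1 - α) * LB) - LS) := by
    field_simp
  rw [e]
  exact mul_nonneg (inv_nonneg.2 h1α.le) (by linarith)

lemma renyi_nonneg {Z : Type*} [Fintype Z] {α : ℝ} (hα0 : 0 < α) (hα1 : α < 1)
    (P : Z → ℝ) (hP0 : ∀ z, 0 ≤ P z) (hPs : ∑ z, P z = 1) :
    0 ≤ renyiEntropy α P := by
  have h1 : (1 : ℝ) ≤ ∑ z, P z ^ α := by
    calc (1 : ℝ) = ∑ z, P z := hPs.symm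
      _ ≤ ∑ z, P z ^ α := by
        refine Finset.sum_le_sum fun z _ => ?_
        rcases eq_or_lt_of_le (hP0 z) with h | h
        · rw [← h, Real.zero_rpow hα0.ne']
        · have hle1 : P z ≤ 1 := by
            calc P z ≤ ∑ w, P w := Finset.single_le_sum (fun w _ => hP0 w) (Finset.mem_univ z)
              _ = 1 := hPs
          have := Real.rpow_le_rpow_of_exponent_ge h hle1 hα1.le
          rwa [Real.rpow_one] at this
  exact mul_nonneg (inv_nonneg.2 (by linarith)) (Real.logb_nonneg one_lt_two h1)

lemma list_pos {Z : Type*} [Fintype Z] {M : ℕ} (f : Z → Fin M) (z : Z) :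
    0 < (Finset.univ.filter fun z' => f z' = f z).card :=
  Finset.card_pos.2 ⟨z, Finset.mem_filter.2 ⟨Finset.mem_univ _, rfl⟩⟩

lemma sum_inv_list_le {Z : Type*} [Fintype Z] {M : ℕ} (f : Z → Fin M) :
    ∑ z, ((Finset.univ.filter fun z' => f z' = f z).card : ℝ)⁻¹ ≤ M := by
  calc ∑ z, ((Finset.univ.filter fun z' => f z' = f z).card : ℝ)⁻¹
      = ∑ j : Fin M, ∑ z ∈ Finset.univ.filter (fun z => f z = j),
          ((Finset.univ.filter fun z' => f z' = f z).card : ℝ)⁻¹ :=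
        (Finset.sum_fiberwise_of_maps_to (fun z _ => Finset.mem_univ (f z)) _).symm
    _ ≤ ∑ _j : Fin M, (1 : ℝ) := by
        refine Finset.sum_le_sum fun j _ => ?_
        have hcongr : ∀ z ∈ Finset.univ.filter (fun z => f z = j),
            ((Finset.univ.filter fun z' => f z' = f z).card : ℝ)⁻¹
              = ((Finset.univ.filter fun z' => f z' = j).card : ℝ)⁻¹ := by
          intro z hz
          rw [(Finset.mem_filter.1 hz).2]
        rw [Finset.sum_congr rfl hcongr, Finset.sum_const, nsmul_eq_mul]
        rcases Nat.eq_zero_or_pos (Finset.univ.filter fun z' => f z' = j).card with h | h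
        · simp [h]
        · rw [mul_inv_cancel₀ (Nat.cast_ne_zero.2 h.ne')]
    _ = M := by simp

lemma single_bound {Z : Type*} [Fintype Z] {M : ℕ} {ρ : ℝ} (hρ : 0 < ρ) (P : Z → ℝ)
    (hP0 : ∀ z, 0 ≤ P z) (hPs : ∑ z, P z = 1) (f : Z → Fin M) :
    renyiEntropy (1 / (1 + ρ)) P ≤ Real.logb 2 M +
      (1 / ρ) * Real.logb 2
        (∑ z, P z * ((Finset.univ.filter fun z' => f z' = f z).card : ℝ) ^ ρ) := by
  haveI : Nonempty Z := aux_nonempty hPs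
  have h1ρ : (0 : ℝ) < 1 + ρ := by linarith
  set α : ℝ := 1 / (1 + ρ) with hαdef
  have hα0 : 0 < α := by positivity
  have hα1 : α < 1 := by rw [hαdef, div_lt_one h1ρ]; linarith
  have h1α : 0 < 1 - α := by linarith
  set L : Z → ℝ := fun z => ((Finset.univ.filter fun z' => f z' = f z).card : ℝ) with hL
  have hL1 : ∀ z, 1 ≤ L z := fun z => Nat.one_le_cast.2 (list_pos f z)
  have hLpos : ∀ z, 0 < L z := fun z => lt_of_lt_of_le zero_lt_one (hL1 z)
  have hQpos : ∀ z, (0:ℝ) < L z ^ (-(1 + ρ)) := fun z => Real.rpow_pos_of_pos (hLpos z) _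
  have h := holder_core hα0 hα1 P (fun z => L z ^ (-(1 + ρ))) hP0 hPs hQpos
  have e1 : ∀ z : Z, (L z ^ (-(1 + ρ))) ^ (α - 1) = L z ^ ρ := by
    intro z
    rw [← Real.rpow_mul (hLpos z).le]
    congr 1
    rw [hαdef]
    field_simp
    ring
  have e2 : ∀ z : Z, (L z ^ (-(1 + ρ))) ^ α = (L z)⁻¹ := by
    intro z
    rw [← Real.rpow_mul (hLpos z).le, ← Real.rpow_neg_one (L z)]
    congr 1
    rw [hαdef]
    field_simp
  simp only [e1, e2] at h
  have hSL_le : ∑ z, (L z)⁻¹ ≤ (M : ℝ) := sum_inv_list_le f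
  have hSLpos : 0 < ∑ z, (L z)⁻¹ :=
    Finset.sum_pos (fun z _ => inv_pos.2 (hLpos z)) Finset.univ_nonempty
  have hlogSL : Real.logb 2 (∑ z, (L z)⁻¹) ≤ Real.logb 2 M :=
    Real.logb_le_logb_of_le one_lt_two hSLpos hSL_le
  have hc : (1 - α)⁻¹ * α = 1 / ρ := by
    rw [hαdef]
    field_simp
    ring
    exact mul_inv_cancel₀ hρ.ne'
  have hd : (1 - α)⁻¹ * (1 - α) = 1 := inv_mul_cancel₀ h1α.ne'
  unfold renyiEntropy
  calc (1 - α)⁻¹ * Real.logb 2 (∑ z, P z ^ α)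
      ≤ (1 - α)⁻¹ * (α * Real.logb 2 (∑ z, P z * L z ^ ρ)
          + (1 - α) * Real.logb 2 (∑ z, (L z)⁻¹)) :=
        mul_le_mul_of_nonneg_left h (inv_nonneg.2 h1α.le)
    _ = (1 / ρ) * Real.logb 2 (∑ z, P z * L z ^ ρ) + Real.logb 2 (∑ z, (L z)⁻¹) := by
        rw [mul_add, ← mul_assoc, ← mul_assoc, hc, hd, one_mul]
    _ ≤ Real.logb 2 M + (1 / ρ) * Real.logb 2 (∑ z, P z * L z ^ ρ) := by
        linarith


lemma rpow_algebra1 {lx ly cx cy ρ : ℝ} (hlx : 0 < lx) (hly : 0 < ly)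
    (hcx : 0 < cx) (hcy : 0 < cy) (h1ρ : (0:ℝ) < 1 + ρ) :
    (lx ^ (-(1+ρ)) / cx * (ly ^ (-(1+ρ)) / cy)) ^ (1/(1+ρ) - 1)
      = (cx * cy) ^ (1 - 1/(1+ρ)) * (lx * ly) ^ ρ := by
  have h1 : lx ^ (-(1+ρ)) / cx * (ly ^ (-(1+ρ)) / cy)
      = (lx * ly) ^ (-(1+ρ)) / (cx * cy) := by
    rw [Real.mul_rpow hlx.le hly.le]; ring
  rw [h1, Real.div_rpow (Real.rpow_nonneg (mul_nonneg hlx.le hly.le) _)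
      (mul_nonneg hcx.le hcy.le),
    ← Real.rpow_mul (mul_nonneg hlx.le hly.le),
    show -(1+ρ) * (1/(1+ρ) - 1) = ρ by field_simp; ring,
    div_eq_mul_inv, ← Real.rpow_neg (mul_nonneg hcx.le hcy.le),
    show -(1/(1+ρ) - 1) = 1 - 1/(1+ρ) by ring, mul_comm]

lemma rpow_algebra2 {lx ly cx cy ρ : ℝ} (hlx : 0 < lx) (hly : 0 < ly)
    (hcx : 0 < cx) (hcy : 0 < cy) (h1ρ : (0:ℝ) < 1 + ρ) :
    (lx ^ (-(1+ρ)) / cx * (ly ^ (-(1+ρ)) / cy)) ^ (1/(1+ρ))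
      = (cx * cy) ^ (-(1/(1+ρ))) * (lx⁻¹ * ly⁻¹) := by
  have h1 : lx ^ (-(1+ρ)) / cx * (ly ^ (-(1+ρ)) / cy)
      = (lx * ly) ^ (-(1+ρ)) / (cx * cy) := by
    rw [Real.mul_rpow hlx.le hly.le]; ring
  rw [h1, Real.div_rpow (Real.rpow_nonneg (mul_nonneg hlx.le hly.le) _)
      (mul_nonneg hcx.le hcy.le),
    ← Real.rpow_mul (mul_nonneg hlx.le hly.le),
    show -(1+ρ) * (1/(1+ρ)) = -1 by field_simp,
    Real.rpow_neg_one, mul_inv, div_eq_mul_inv,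
    ← Real.rpow_neg (mul_nonneg hcx.le hcy.le), mul_comm]

lemma jointListSize_pos {X Y : Type*} [Fintype X] [Fintype Y] {MX MY : ℕ}
    (f : X → Fin MX) (g : Y → Fin MY) (x : X) (y : Y) : 0 < jointListSize f g x y :=
  Finset.card_pos.2 ⟨(x, y), Finset.mem_filter.2 ⟨Finset.mem_univ _, rfl, rfl⟩⟩

lemma jointListSize_eq {X Y : Type*} [Fintype X] [Fintype Y] {MX MY : ℕ}
    (f : X → Fin MX) (g : Y → Fin MY) (x : X) (y : Y) :
    (jointListSize f g x y : ℝ) =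
      ((Finset.univ.filter fun x' => f x' = f x).card : ℝ) *
      ((Finset.univ.filter fun y' => g y' = g y).card : ℝ) := by
  unfold jointListSize
  rw [← Nat.cast_mul]
  congr 1
  rw [← Finset.univ_product_univ,
    Finset.filter_product (fun x' => f x' = f x) (fun y' => g y' = g y),
    Finset.card_product]

lemma limsup_aux (f c : ℕ → ℝ) (R : ℝ) (hc0 : ∀ n, 0 ≤ c n)
    (hcto : Tendsto c atTop (nhds 0)) (hf0 : ∀ n, 0 ≤ f n)
    (hle : ∀ n, f n ≤ R + c n) : limsup f atTop ≤ R := by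
  have hg : Tendsto (fun n => R + c n) atTop (nhds R) := by
    simpa using tendsto_const_nhds.add hcto
  have hgb : IsBoundedUnder (· ≤ ·) atTop (fun n => R + c n) := hg.isBoundedUnder_le
  have hfb : IsBoundedUnder (· ≥ ·) atTop f :=
    ⟨0, Filter.eventually_map.2 (Eventually.of_forall hf0)⟩
  have h2 : limsup f atTop ≤ limsup (fun n => R + c n) atTop :=
    limsup_le_limsup (Eventually.of_forall hle) hfb.isCoboundedUnder_le hgb
  rwa [hg.limsup_eq] at h2

lemma div_bound {H R c : ℝ} (n : ℕ) (hR : 0 ≤ R) (hc : 0 ≤ c) (hH : 0 ≤ H)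
    (h : n ≠ 0 → H ≤ n * R + c) : H / n ≤ R + c := by
  rcases eq_or_ne n 0 with rfl | hn
  · simpa using add_nonneg hR hc
  · have hn1 : (1:ℝ) ≤ n := by exact_mod_cast Nat.one_le_iff_ne_zero.2 hn
    rw [div_le_iff₀ (by linarith)]
    have h2 := h hn
    nlinarith [mul_nonneg hc (sub_nonneg.2 hn1)]


lemma Kdep_nonneg {ZX ZY : Type*} [Fintype ZX] [Fintype ZY] {α : ℝ} (hα0 : 0 < α) (hα1 : α < 1)
    (P : ZX × ZY → ℝ) (hP0 : ∀ p, 0 ≤ P p) (hPs : ∑ p, P p = 1) : 0 ≤ Kdep α P := by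
  haveI hne : Nonempty (ZX × ZY) := aux_nonempty hPs
  haveI : Nonempty ZX := ⟨hne.some.1⟩
  haveI : Nonempty ZY := ⟨hne.some.2⟩
  have hcX : (0:ℝ) < (Fintype.card ZX : ℝ) := by exact_mod_cast Fintype.card_pos
  have hcY : (0:ℝ) < (Fintype.card ZY : ℝ) := by exact_mod_cast Fintype.card_pos
  unfold Kdep
  apply le_csInf
  · refine ⟨relAlphaEntropy α P (fun p => (Fintype.card ZX : ℝ)⁻¹ * (Fintype.card ZY : ℝ)⁻¹),
      (fun _ => (Fintype.card ZX : ℝ)⁻¹), (fun _ => (Fintype.card ZY : ℝ)⁻¹),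
      ⟨fun _ => (inv_pos.2 hcX).le, ?_⟩, ⟨fun _ => (inv_pos.2 hcY).le, ?_⟩,
      fun _ => inv_pos.2 hcX, fun _ => inv_pos.2 hcY, rfl⟩
    · rw [Finset.sum_const, Finset.card_univ, nsmul_eq_mul, mul_inv_cancel₀ hcX.ne']
    · rw [Finset.sum_const, Finset.card_univ, nsmul_eq_mul, mul_inv_cancel₀ hcY.ne']
  · rintro r ⟨QX', QY', _, _, h3, h4, rfl⟩
    exact relAlpha_nonneg hα0 hα1 P _ hP0 hPs fun p => mul_pos (h3 p.1) (h4 p.2)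

lemma joint_bound_core {ZX ZY : Type*} [Fintype ZX] [Fintype ZY] {ρ : ℝ} (hρ : 0 < ρ)
    (P : ZX × ZY → ℝ) (hP0 : ∀ p, 0 ≤ P p) (hPs : ∑ p, P p = 1)
    (LX : ZX → ℝ) (LY : ZY → ℝ) (hLX1 : ∀ x, 1 ≤ LX x) (hLY1 : ∀ y, 1 ≤ LY y) :
    renyiEntropy (1 / (1 + ρ)) P + Kdep (1 / (1 + ρ)) P ≤
      Real.logb 2 (∑ x, (LX x)⁻¹) + Real.logb 2 (∑ y, (LY y)⁻¹) +
      (1 / ρ) * Real.logb 2 (∑ p : ZX × ZY, P p * (LX p.1 * LY p.2) ^ ρ) := by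
  haveI hne : Nonempty (ZX × ZY) := aux_nonempty hPs
  haveI : Nonempty ZX := ⟨hne.some.1⟩
  haveI : Nonempty ZY := ⟨hne.some.2⟩
  have h1ρ : (0 : ℝ) < 1 + ρ := by linarith
  set α : ℝ := 1 / (1 + ρ) with hαdef
  have hα0 : 0 < α := by positivity
  have hα1 : α < 1 := by rw [hαdef, div_lt_one h1ρ]; linarith
  have h1α : 0 < 1 - α := by linarith
  have hLXpos : ∀ x, 0 < LX x := fun x => lt_of_lt_of_le zero_lt_one (hLX1 x)
  have hLYpos : ∀ y, 0 < LY y := fun y => lt_of_lt_of_le zero_lt_one (hLY1 y)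
  set cX : ℝ := ∑ x, LX x ^ (-(1+ρ)) with hcX
  set cY : ℝ := ∑ y, LY y ^ (-(1+ρ)) with hcY
  have hcXpos : 0 < cX :=
    Finset.sum_pos (fun x _ => Real.rpow_pos_of_pos (hLXpos x) _) Finset.univ_nonempty
  have hcYpos : 0 < cY :=
    Finset.sum_pos (fun y _ => Real.rpow_pos_of_pos (hLYpos y) _) Finset.univ_nonempty
  set QX : ZX → ℝ := fun x => LX x ^ (-(1+ρ)) / cX with hQX
  set QY : ZY → ℝ := fun y => LY y ^ (-(1+ρ)) / cY with hQY
  have hQXpos : ∀ x, 0 < QX x := fun x =>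
    div_pos (Real.rpow_pos_of_pos (hLXpos x) _) hcXpos
  have hQYpos : ∀ y, 0 < QY y := fun y =>
    div_pos (Real.rpow_pos_of_pos (hLYpos y) _) hcYpos
  have hQXsum : ∑ x, QX x = 1 := by
    simp only [hQX]
    rw [← Finset.sum_div, ← hcX, div_self hcXpos.ne']
  have hQYsum : ∑ y, QY y = 1 := by
    simp only [hQY]
    rw [← Finset.sum_div, ← hcY, div_self hcYpos.ne']
  have hKle : Kdep α P ≤ relAlphaEntropy α P (fun p => QX p.1 * QY p.2) := by
    unfold Kdep
    apply csInf_le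
    · refine ⟨0, ?_⟩
      rintro r ⟨QX', QY', _, _, h3, h4, rfl⟩
      exact relAlpha_nonneg hα0 hα1 P _ hP0 hPs fun p => mul_pos (h3 p.1) (h4 p.2)
    · exact ⟨QX, QY, ⟨fun x => (hQXpos x).le, hQXsum⟩, ⟨fun y => (hQYpos y).le, hQYsum⟩,
        hQXpos, hQYpos, rfl⟩
  set SX : ℝ := ∑ x, (LX x)⁻¹ with hSX
  set SY : ℝ := ∑ y, (LY y)⁻¹ with hSY
  have hSXpos : 0 < SX :=
    Finset.sum_pos (fun x _ => inv_pos.2 (hLXpos x)) Finset.univ_nonempty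
  have hSYpos : 0 < SY :=
    Finset.sum_pos (fun y _ => inv_pos.2 (hLYpos y)) Finset.univ_nonempty
  set E : ℝ := ∑ p : ZX × ZY, P p * (LX p.1 * LY p.2) ^ ρ with hE
  have hE1 : (1:ℝ) ≤ E := by
    rw [hE, ← hPs]
    refine Finset.sum_le_sum fun p _ => le_mul_of_one_le_right (hP0 p) ?_
    exact one_le_rpow_aux (by nlinarith [hLX1 p.1, hLY1 p.2]) hρ.le
  have hEpos : (0:ℝ) < E := lt_of_lt_of_le zero_lt_one hE1
  have eA : ∀ p : ZX × ZY, (QX p.1 * QY p.2) ^ (α - 1)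
      = (cX * cY) ^ (1 - α) * (LX p.1 * LY p.2) ^ ρ := by
    intro p
    simp only [hQX, hQY, hαdef]
    exact rpow_algebra1 (hLXpos p.1) (hLYpos p.2) hcXpos hcYpos h1ρ
  have eB : ∀ p : ZX × ZY, (QX p.1 * QY p.2) ^ α
      = (cX * cY) ^ (-α) * ((LX p.1)⁻¹ * (LY p.2)⁻¹) := by
    intro p
    simp only [hQX, hQY, hαdef]
    exact rpow_algebra2 (hLXpos p.1) (hLYpos p.2) hcXpos hcYpos h1ρ
  have hA : (∑ p : ZX × ZY, P p * (QX p.1 * QY p.2) ^ (α - 1)) = (cX * cY) ^ (1 - α) * E := by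
    rw [hE, Finset.mul_sum]
    refine Finset.sum_congr rfl fun p _ => ?_
    rw [eA p]; ring
  have hB : (∑ p : ZX × ZY, (QX p.1 * QY p.2) ^ α) = (cX * cY) ^ (-α) * (SX * SY) := by
    calc (∑ p : ZX × ZY, (QX p.1 * QY p.2) ^ α)
        = ∑ p : ZX × ZY, (cX * cY) ^ (-α) * ((LX p.1)⁻¹ * (LY p.2)⁻¹) :=
          Finset.sum_congr rfl fun p _ => eB p
      _ = (cX * cY) ^ (-α) * ∑ p : ZX × ZY, ((LX p.1)⁻¹ * (LY p.2)⁻¹) :=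
          (Finset.mul_sum _ _ _).symm
      _ = (cX * cY) ^ (-α) * (SX * SY) := by
          congr 1
          rw [Fintype.sum_prod_type]
          exact (Finset.sum_mul_sum Finset.univ Finset.univ (fun x => (LX x)⁻¹) (fun y => (LY y)⁻¹)).symm
  have hccpos : 0 < cX * cY := mul_pos hcXpos hcYpos
  have key : renyiEntropy α P + relAlphaEntropy α P (fun p => QX p.1 * QY p.2)
      = (1 / ρ) * Real.logb 2 E + Real.logb 2 SX + Real.logb 2 SY := by
    simp only [renyiEntropy, relAlphaEntropy]
    rw [hA, hB,
      Real.logb_mul (Real.rpow_pos_of_pos hccpos _).ne' hEpos.ne',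
      Real.logb_mul (Real.rpow_pos_of_pos hccpos _).ne' (mul_pos hSXpos hSYpos).ne',
      Real.logb_mul hSXpos.ne' hSYpos.ne',
      Real.logb_rpow_eq_mul_logb_of_pos hccpos,
      Real.logb_rpow_eq_mul_logb_of_pos hccpos]
    simp only [hαdef]
    field_simp
    ring
    have h' : ρ * ρ⁻¹ = 1 := mul_inv_cancel₀ hρ.ne'
    have h'' : ρ ^ 2 * ρ⁻¹ = ρ := by rw [pow_two, mul_assoc, h', mul_one]
    rw [h', h'']; ring
  have hfin := add_le_add (le_refl (renyiEntropy α P)) hKle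
  rw [key] at hfin
  refine hfin.trans ?_
  linarith

/-- converse, general sources: if for each `n` the pair `(X^n, Y^n)` has joint
PMF `P n` on `X^n × Y^n`, and there are encoders `f_n : X^n → {1,…,⌊2^{nR_X}⌋}` and
`g_n : Y^n → {1,…,⌊2^{nR_Y}⌋}` whose `ρ`-th moment of the joint list size tends to `1`, then
`R_X ≥ limsup H_{ρ̃}(P_{X^n})/n`, `R_Y ≥ limsup H_{ρ̃}(P_{Y^n})/n`, and
`R_X + R_Y ≥ limsup [H_{ρ̃}(P_{X^n Y^n}) + K_{ρ̃}(X^n;Y^n)]/n`, where `ρ̃ = 1/(1+ρ)`. -/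
theorem distributed_task_encoding_converse_general
    {X Y : Type*} [Fintype X] [Fintype Y]
    (ρ : ℝ) (hρ : 0 < ρ)
    (P : ∀ n : ℕ, (Fin n → X) × (Fin n → Y) → ℝ) (hP : ∀ n, IsPMF (P n))
    (RX RY : ℝ) (hRX : 0 ≤ RX) (hRY : 0 ≤ RY)
    (F : ∀ n : ℕ, (Fin n → X) → Fin ⌊(2 : ℝ) ^ ((n : ℝ) * RX)⌋₊)
    (G : ∀ n : ℕ, (Fin n → Y) → Fin ⌊(2 : ℝ) ^ ((n : ℝ) * RY)⌋₊)
    (hconv : Tendsto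
      (fun n : ℕ => ∑ p : (Fin n → X) × (Fin n → Y),
        P n p * (jointListSize (F n) (G n) p.1 p.2 : ℝ) ^ ρ)
      atTop (nhds 1)) :
    RX ≥ limsup (fun n : ℕ =>
        renyiEntropy (1 / (1 + ρ)) (fun xs : Fin n → X => ∑ ys : Fin n → Y, P n (xs, ys))
          / (n : ℝ)) atTop ∧
    RY ≥ limsup (fun n : ℕ =>
        renyiEntropy (1 / (1 + ρ)) (fun ys : Fin n → Y => ∑ xs : Fin n → X, P n (xs, ys))
          / (n : ℝ)) atTop ∧
    RX + RY ≥ limsup (fun n : ℕ =>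
        (renyiEntropy (1 / (1 + ρ)) (P n) + Kdep (1 / (1 + ρ)) (P n)) / (n : ℝ)) atTop := by
  have h1ρ : (0:ℝ) < 1 + ρ := by linarith
  have hα0 : (0:ℝ) < 1/(1+ρ) := by positivity
  have hα1 : 1/(1+ρ) < 1 := by rw [div_lt_one h1ρ]; linarith
  have hne1 : Nonempty ((Fin 1 → X) × (Fin 1 → Y)) := aux_nonempty (hP 1).2
  haveI hX : Nonempty X := ⟨hne1.some.1 0⟩
  haveI hY : Nonempty Y := ⟨hne1.some.2 0⟩
  set E : ℕ → ℝ := fun n : ℕ => ∑ p : (Fin n → X) × (Fin n → Y),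
      P n p * (jointListSize (F n) (G n) p.1 p.2 : ℝ) ^ ρ with hE
  have hE1 : ∀ n, (1:ℝ) ≤ E n := by
    intro n
    simp only [hE]
    rw [← (hP n).2]
    refine Finset.sum_le_sum fun p _ => le_mul_of_one_le_right ((hP n).1 p) ?_
    exact one_le_rpow_aux (Nat.one_le_cast.2 (jointListSize_pos _ _ _ _)) hρ.le
  have hc0 : ∀ n, 0 ≤ (1/ρ) * Real.logb 2 (E n) := fun n =>
    mul_nonneg (by positivity) (Real.logb_nonneg one_lt_two (hE1 n))
  have hcto : Tendsto (fun n => (1/ρ) * Real.logb 2 (E n)) atTop (nhds 0) := by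
    have hlog : Tendsto (fun n => Real.log (E n)) atTop (nhds 0) := by
      have hcont := (Real.continuousAt_log (by norm_num : (1:ℝ) ≠ 0)).tendsto
      have h2 := hcont.comp hconv
      simpa [Function.comp_def] using h2
    have h2 := (hlog.div_const (Real.log 2)).const_mul (1/ρ)
    simpa [Real.logb] using h2
  have hMfloor : ∀ t : ℝ, 0 ≤ t → Real.logb 2 ((⌊(2:ℝ) ^ t⌋₊ : ℕ) : ℝ) ≤ t := by
    intro t ht
    have hone : (1:ℝ) ≤ (2:ℝ) ^ t := by
      have := Real.rpow_le_rpow_of_exponent_le (by norm_num : (1:ℝ) ≤ 2) ht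
      rwa [Real.rpow_zero] at this
    have hfl : ((⌊(2:ℝ) ^ t⌋₊ : ℕ) : ℝ) ≤ (2:ℝ) ^ t := Nat.floor_le (by linarith)
    have hpos : (0:ℝ) < ((⌊(2:ℝ) ^ t⌋₊ : ℕ) : ℝ) := by
      exact_mod_cast Nat.floor_pos.2 hone
    calc Real.logb 2 ((⌊(2:ℝ) ^ t⌋₊ : ℕ) : ℝ)
        ≤ Real.logb 2 ((2:ℝ) ^ t) := Real.logb_le_logb_of_le one_lt_two hpos hfl
      _ = t := Real.logb_rpow (by norm_num) (by norm_num)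
  have hPX0 : ∀ n (xs : Fin n → X), 0 ≤ ∑ ys, P n (xs, ys) :=
    fun n xs => Finset.sum_nonneg fun y _ => (hP n).1 _
  have hPXs : ∀ n, (∑ xs : Fin n → X, ∑ ys, P n (xs, ys)) = 1 := by
    intro n
    rw [← Fintype.sum_prod_type]
    exact (hP n).2
  have hPY0 : ∀ n (ys : Fin n → Y), 0 ≤ ∑ xs, P n (xs, ys) :=
    fun n ys => Finset.sum_nonneg fun x _ => (hP n).1 _
  have hPYs : ∀ n, (∑ ys : Fin n → Y, ∑ xs, P n (xs, ys)) = 1 := by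
    intro n
    rw [← Fintype.sum_prod_type_right]
    exact (hP n).2
  refine ⟨?_, ?_, ?_⟩
  · refine limsup_aux _ (fun n => (1/ρ) * Real.logb 2 (E n)) RX hc0 hcto
      (fun n => div_nonneg (renyi_nonneg hα0 hα1 _ (hPX0 n) (hPXs n)) (Nat.cast_nonneg n)) ?_
    intro n
    apply div_bound n hRX (hc0 n) (renyi_nonneg hα0 hα1 _ (hPX0 n) (hPXs n))
    intro _
    have hsb := single_bound hρ (fun xs : Fin n → X => ∑ ys, P n (xs, ys))
      (hPX0 n) (hPXs n) (F n)
    have hge1 : (1:ℝ) ≤ ∑ xs : Fin n → X, (∑ ys, P n (xs, ys)) *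
        ((Finset.univ.filter fun x' => F n x' = F n xs).card : ℝ) ^ ρ := by
      rw [← hPXs n]
      refine Finset.sum_le_sum fun xs _ => le_mul_of_one_le_right (hPX0 n xs) ?_
      exact one_le_rpow_aux (Nat.one_le_cast.2 (list_pos (F n) xs)) hρ.le
    have hle : (∑ xs : Fin n → X, (∑ ys, P n (xs, ys)) *
        ((Finset.univ.filter fun x' => F n x' = F n xs).card : ℝ) ^ ρ) ≤ E n := by
      simp only [hE]
      rw [Fintype.sum_prod_type]
      refine Finset.sum_le_sum fun x _ => ?_
      rw [Finset.sum_mul]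
      refine Finset.sum_le_sum fun y _ => ?_
      refine mul_le_mul_of_nonneg_left ?_ ((hP n).1 _)
      rw [jointListSize_eq (F n) (G n) x y]
      refine Real.rpow_le_rpow (Nat.cast_nonneg _) ?_ hρ.le
      exact le_mul_of_one_le_right (Nat.cast_nonneg _) (Nat.one_le_cast.2 (list_pos (G n) y))
    calc renyiEntropy (1/(1+ρ)) (fun xs : Fin n → X => ∑ ys, P n (xs, ys))
        ≤ Real.logb 2 ((⌊(2:ℝ) ^ ((n:ℝ) * RX)⌋₊ : ℕ) : ℝ) + (1/ρ) * Real.logb 2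
            (∑ xs : Fin n → X, (∑ ys, P n (xs, ys)) *
              ((Finset.univ.filter fun x' => F n x' = F n xs).card : ℝ) ^ ρ) := hsb
      _ ≤ (n:ℝ) * RX + (1/ρ) * Real.logb 2 (E n) := by
          refine add_le_add (hMfloor _ (mul_nonneg (Nat.cast_nonneg n) hRX)) ?_
          refine mul_le_mul_of_nonneg_left ?_ (by positivity)
          exact Real.logb_le_logb_of_le one_lt_two (lt_of_lt_of_le zero_lt_one hge1) hle
  · refine limsup_aux _ (fun n => (1/ρ) * Real.logb 2 (E n)) RY hc0 hcto
      (fun n => div_nonneg (renyi_nonneg hα0 hα1 _ (hPY0 n) (hPYs n)) (Nat.cast_nonneg n)) ?_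
    intro n
    apply div_bound n hRY (hc0 n) (renyi_nonneg hα0 hα1 _ (hPY0 n) (hPYs n))
    intro _
    have hsb := single_bound hρ (fun ys : Fin n → Y => ∑ xs, P n (xs, ys))
      (hPY0 n) (hPYs n) (G n)
    have hge1 : (1:ℝ) ≤ ∑ ys : Fin n → Y, (∑ xs, P n (xs, ys)) *
        ((Finset.univ.filter fun y' => G n y' = G n ys).card : ℝ) ^ ρ := by
      rw [← hPYs n]
      refine Finset.sum_le_sum fun ys _ => le_mul_of_one_le_right (hPY0 n ys) ?_
      exact one_le_rpow_aux (Nat.one_le_cast.2 (list_pos (G n) ys)) hρ.le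
    have hle : (∑ ys : Fin n → Y, (∑ xs, P n (xs, ys)) *
        ((Finset.univ.filter fun y' => G n y' = G n ys).card : ℝ) ^ ρ) ≤ E n := by
      simp only [hE]
      rw [Fintype.sum_prod_type_right]
      refine Finset.sum_le_sum fun y _ => ?_
      rw [Finset.sum_mul]
      refine Finset.sum_le_sum fun x _ => ?_
      refine mul_le_mul_of_nonneg_left ?_ ((hP n).1 _)
      rw [jointListSize_eq (F n) (G n) x y]
      refine Real.rpow_le_rpow (Nat.cast_nonneg _) ?_ hρ.le
      exact le_mul_of_one_le_left (Nat.cast_nonneg _) (Nat.one_le_cast.2 (list_pos (F n) x))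
    calc renyiEntropy (1/(1+ρ)) (fun ys : Fin n → Y => ∑ xs, P n (xs, ys))
        ≤ Real.logb 2 ((⌊(2:ℝ) ^ ((n:ℝ) * RY)⌋₊ : ℕ) : ℝ) + (1/ρ) * Real.logb 2
            (∑ ys : Fin n → Y, (∑ xs, P n (xs, ys)) *
              ((Finset.univ.filter fun y' => G n y' = G n ys).card : ℝ) ^ ρ) := hsb
      _ ≤ (n:ℝ) * RY + (1/ρ) * Real.logb 2 (E n) := by
          refine add_le_add (hMfloor _ (mul_nonneg (Nat.cast_nonneg n) hRY)) ?_
          refine mul_le_mul_of_nonneg_left ?_ (by positivity)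
          exact Real.logb_le_logb_of_le one_lt_two (lt_of_lt_of_le zero_lt_one hge1) hle
  · refine limsup_aux _ (fun n => (1/ρ) * Real.logb 2 (E n)) (RX + RY) hc0 hcto
      (fun n => div_nonneg (add_nonneg (renyi_nonneg hα0 hα1 _ (hP n).1 (hP n).2)
        (Kdep_nonneg hα0 hα1 _ (hP n).1 (hP n).2)) (Nat.cast_nonneg n)) ?_
    intro n
    apply div_bound n (add_nonneg hRX hRY) (hc0 n)
      (add_nonneg (renyi_nonneg hα0 hα1 _ (hP n).1 (hP n).2)
        (Kdep_nonneg hα0 hα1 _ (hP n).1 (hP n).2))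
    intro _
    have hjb := joint_bound_core hρ (P n) (hP n).1 (hP n).2
      (fun x => ((Finset.univ.filter fun x' => F n x' = F n x).card : ℝ))
      (fun y => ((Finset.univ.filter fun y' => G n y' = G n y).card : ℝ))
      (fun x => Nat.one_le_cast.2 (list_pos (F n) x))
      (fun y => Nat.one_le_cast.2 (list_pos (G n) y))
    have hEeq : (∑ p : (Fin n → X) × (Fin n → Y), P n p *
        (((Finset.univ.filter fun x' => F n x' = F n p.1).card : ℝ) *
         ((Finset.univ.filter fun y' => G n y' = G n p.2).card : ℝ)) ^ ρ) = E n := by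
      simp only [hE]
      exact Finset.sum_congr rfl fun p _ => by rw [jointListSize_eq (F n) (G n) p.1 p.2]
    rw [hEeq] at hjb
    have hSXpos : (0:ℝ) < ∑ x : Fin n → X,
        (((Finset.univ.filter fun x' => F n x' = F n x).card : ℝ))⁻¹ :=
      Finset.sum_pos (fun x _ => inv_pos.2 (by exact_mod_cast list_pos (F n) x))
        Finset.univ_nonempty
    have hSYpos : (0:ℝ) < ∑ y : Fin n → Y,
        (((Finset.univ.filter fun y' => G n y' = G n y).card : ℝ))⁻¹ :=
      Finset.sum_pos (fun y _ => inv_pos.2 (by exact_mod_cast list_pos (G n) y))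
        Finset.univ_nonempty
    have h1 : Real.logb 2 (∑ x : Fin n → X,
        (((Finset.univ.filter fun x' => F n x' = F n x).card : ℝ))⁻¹) ≤ (n:ℝ) * RX :=
      le_trans (Real.logb_le_logb_of_le one_lt_two hSXpos (sum_inv_list_le (F n)))
        (hMfloor _ (mul_nonneg (Nat.cast_nonneg n) hRX))
    have h2 : Real.logb 2 (∑ y : Fin n → Y,
        (((Finset.univ.filter fun y' => G n y' = G n y).card : ℝ))⁻¹) ≤ (n:ℝ) * RY :=
      le_trans (Real.logb_le_logb_of_le one_lt_two hSYpos (sum_inv_list_le (G n)))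
        (hMfloor _ (mul_nonneg (Nat.cast_nonneg n) hRY))
    rw [mul_add]
    linarith
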